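/- For each k ∈ ℕ let (ρ_iᵏ)_{i∈ℕ} be a sequence of nonnegative real numbers which is nonincreasing in i and has only finitely many nonzero terms. Assume s_k := Σ_{i∈ℕ} ρ_iᵏ converges to some s > 0, and that for each i the limit ρ_i := lim_{k→∞} ρ_iᵏ exists. Set s_I := Σ_{i∈ℕ} ρ_i (which satisfies s_I ≤ s). Then liminf_{k→∞} Σ_{i<j} ρ_iᵏ ρ_jᵏ ≥ ( s_I² − Σ_{i∈ℕ} ρ_i² + (s − s_I)² ) / 2. -/
import Mathlib


open Filter

theorem pair_identity_aux (a : ℕ → ℝ) (N : ℕ) :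
    2 * ∑ p ∈ Finset.range N ×ˢ Finset.range N, (if p.1 < p.2 then a p.1 * a p.2 else 0)
      = (∑ i ∈ Finset.range N, a i)^2 - ∑ i ∈ Finset.range N, (a i)^2 := by
  set t := Finset.range N ×ˢ Finset.range N with ht
  have h1 : (∑ i ∈ Finset.range N, a i)^2 = ∑ p ∈ t, a p.1 * a p.2 := by
    rw [sq, Finset.sum_mul_sum, ht, Finset.sum_product]
  have h2 : ∑ p ∈ t, a p.1 * a p.2
      = ∑ p ∈ t, ((if p.1 < p.2 then a p.1 * a p.2 else 0)
          + (if p.2 < p.1 then a p.1 * a p.2 else 0)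
          + (if p.1 = p.2 then a p.1 * a p.2 else 0)) := by
    refine Finset.sum_congr rfl fun p _ => ?_
    rcases lt_trichotomy p.1 p.2 with h | h | h
    · simp [h, lt_asymm h, ne_of_lt h]
    · simp [h, lt_irrefl]
    · simp [h, lt_asymm h, (ne_of_lt h).symm]
  have h3 : ∑ p ∈ t, (if p.2 < p.1 then a p.1 * a p.2 else 0)
      = ∑ p ∈ t, (if p.1 < p.2 then a p.1 * a p.2 else 0) := by
    refine Finset.sum_equiv (Equiv.prodComm ℕ ℕ) ?_ ?_
    · intro p; simp [ht, Finset.mem_product, and_comm]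
    · intro p hp; simp [mul_comm]
  have h4 : ∑ p ∈ t, (if p.1 = p.2 then a p.1 * a p.2 else 0)
      = ∑ i ∈ Finset.range N, (a i)^2 := by
    rw [ht, Finset.sum_product]
    refine Finset.sum_congr rfl fun i hi => ?_
    rw [Finset.sum_ite_eq]
    simp [hi, sq]
  rw [h2, Finset.sum_add_distrib, Finset.sum_add_distrib, h3, h4] at h1
  linarith

/-- Fatou-type lower bound for pair sums: if each `(ρᵢᵏ)ᵢ` is a nonincreasing,
finitely supported family of nonnegative reals with `Σᵢ ρᵢᵏ → s > 0` and pointwise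
limits `ρᵢᵏ → ρᵢ`, then with `s_I = Σᵢ ρᵢ`,
`liminf_k Σ_{i<j} ρᵢᵏ ρⱼᵏ ≥ (s_I² − Σᵢ ρᵢ² + (s − s_I)²)/2`. -/
theorem pair_sum_liminf_lower_bound (ρ : ℕ → ℕ → ℝ)
    (hnn : ∀ k i, 0 ≤ ρ k i)
    (hanti : ∀ k, Antitone (ρ k))
    (hfin : ∀ k, ∃ N : ℕ, ∀ i ≥ N, ρ k i = 0)
    (s : ℝ) (hs : 0 < s)
    (hsum : Tendsto (fun k => ∑' i : ℕ, ρ k i) atTop (nhds s))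
    (ρl : ℕ → ℝ) (hlim : ∀ i, Tendsto (fun k => ρ k i) atTop (nhds (ρl i))) :
    ((∑' i : ℕ, ρl i) ^ 2 - (∑' i : ℕ, (ρl i) ^ 2) + (s - ∑' i : ℕ, ρl i) ^ 2) / 2
      ≤ liminf
          (fun k => ∑' p : ℕ × ℕ, if p.1 < p.2 then ρ k p.1 * ρ k p.2 else 0)
          atTop := by
  classical
  choose Nf hNf using hfin
  have hsummk : ∀ k, Summable (ρ k) := fun k =>
    summable_of_ne_finset_zero (s := Finset.range (Nf k))
      (fun i hi => hNf k i (not_lt.mp (by simpa using hi)))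
  have hsummk2 : ∀ k, Summable (fun i => (ρ k i)^2) := fun k =>
    summable_of_ne_finset_zero (s := Finset.range (Nf k))
      (fun i hi => by rw [hNf k i (not_lt.mp (by simpa using hi))]; ring)
  set sk : ℕ → ℝ := fun k => ∑' i, ρ k i with hsk
  set T : ℕ → ℝ := fun k => ∑' i, (ρ k i)^2 with hT
  set u : ℕ → ℝ := fun k => ∑' p : ℕ × ℕ, if p.1 < p.2 then ρ k p.1 * ρ k p.2 else 0 with hu
  have hsk_nn : ∀ k, 0 ≤ sk k := fun k => tsum_nonneg (hnn k)
  have hT_nn : ∀ k, 0 ≤ T k := fun k => tsum_nonneg fun i => sq_nonneg _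
  have hkey : ∀ k, u k = ((sk k)^2 - T k)/2 := by
    intro k
    have e1 : sk k = ∑ i ∈ Finset.range (Nf k), ρ k i :=
      tsum_eq_sum (fun i hi => hNf k i (not_lt.mp (by simpa using hi)))
    have e2 : T k = ∑ i ∈ Finset.range (Nf k), (ρ k i)^2 :=
      tsum_eq_sum fun i hi => by rw [hNf k i (not_lt.mp (by simpa using hi))]; ring
    have e3 : u k = ∑ p ∈ Finset.range (Nf k) ×ˢ Finset.range (Nf k),
        (if p.1 < p.2 then ρ k p.1 * ρ k p.2 else 0) := by
      refine tsum_eq_sum fun p hp => ?_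
      rw [Finset.mem_product, not_and_or] at hp
      rcases hp with h | h
      · have := hNf k p.1 (not_lt.mp (by simpa using h))
        simp [this]
      · have := hNf k p.2 (not_lt.mp (by simpa using h))
        simp [this]
    have := pair_identity_aux (ρ k) (Nf k)
    rw [e1, e2, e3]; linarith
  -- properties of the limit sequence
  have hρl_nn : ∀ i, 0 ≤ ρl i := fun i =>
    ge_of_tendsto (hlim i) (Eventually.of_forall fun k => hnn k i)
  have hρl_anti : Antitone ρl := fun i j hij =>
    le_of_tendsto_of_tendsto' (hlim j) (hlim i) (fun k => hanti k hij)
  have hpartial : ∀ N, ∑ i ∈ Finset.range N, ρl i ≤ s := by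
    intro N
    have h1 : Tendsto (fun k => ∑ i ∈ Finset.range N, ρ k i) atTop
        (nhds (∑ i ∈ Finset.range N, ρl i)) :=
      tendsto_finset_sum _ (fun i _ => hlim i)
    refine le_of_tendsto_of_tendsto' h1 hsum fun k => ?_
    exact Summable.sum_le_tsum _ (fun i _ => hnn k i) (hsummk k)
  have hρl_sum : Summable ρl := summable_of_sum_range_le hρl_nn hpartial
  have hsI_le : ∑' i, ρl i ≤ s := Real.tsum_le_of_sum_range_le hρl_nn hpartial
  have hsI_nn : 0 ≤ ∑' i, ρl i := tsum_nonneg hρl_nn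
  have hρl2_sum : Summable (fun i => (ρl i)^2) := by
    refine Summable.of_nonneg_of_le (fun i => sq_nonneg _) (fun i => ?_)
      (hρl_sum.mul_left (ρl 0))
    have : ρl i ≤ ρl 0 := hρl_anti (Nat.zero_le i)
    calc (ρl i)^2 = ρl i * ρl i := sq (ρl i)
      _ ≤ ρl 0 * ρl i := mul_le_mul_of_nonneg_right this (hρl_nn i)
  set Q := ∑' i, (ρl i)^2 with hQ
  have hρl_to0 : Tendsto ρl atTop (nhds 0) := hρl_sum.tendsto_atTop_zero
  -- key tail bound
  have hTbound : ∀ N k, T k ≤ ∑ i ∈ Finset.range N, (ρ k i)^2 + ρ k N * sk k := by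
    intro N k
    have hsq_tail : Summable (fun i => (ρ k (i + N))^2) :=
      ((summable_nat_add_iff N).mpr (hsummk2 k))
    have h_tail : Summable (fun i => ρ k (i + N)) :=
      ((summable_nat_add_iff N).mpr (hsummk k))
    have hsplit2 : (∑ i ∈ Finset.range N, (ρ k i)^2) + ∑' i, (ρ k (i + N))^2 = T k :=
      Summable.sum_add_tsum_nat_add N (hsummk2 k)
    have hsplit1 : (∑ i ∈ Finset.range N, ρ k i) + ∑' i, ρ k (i + N) = sk k :=
      Summable.sum_add_tsum_nat_add N (hsummk k)
    have htail1 : ∑' i, ρ k (i + N) ≤ sk k := by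
      have : 0 ≤ ∑ i ∈ Finset.range N, ρ k i :=
        Finset.sum_nonneg fun i _ => hnn k i
      linarith
    have htail2 : ∑' i, (ρ k (i + N))^2 ≤ ρ k N * ∑' i, ρ k (i + N) := by
      rw [← tsum_mul_left]
      refine Summable.tsum_le_tsum (fun i => ?_) hsq_tail (h_tail.mul_left _)
      have h1 : ρ k (i + N) ≤ ρ k N := hanti k (Nat.le_add_left N i)
      calc (ρ k (i + N))^2 = ρ k (i + N) * ρ k (i + N) := sq _
        _ ≤ ρ k N * ρ k (i + N) := mul_le_mul_of_nonneg_right h1 (hnn k _)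
    have h2 : ρ k N * ∑' i, ρ k (i + N) ≤ ρ k N * sk k :=
      mul_le_mul_of_nonneg_left htail1 (hnn k N)
    linarith
  -- u is eventually bounded above (for coboundedness)
  have hub : IsCoboundedUnder (· ≥ ·) atTop u := by
    refine isCoboundedUnder_ge_of_eventually_le atTop (x := (s + 1)^2 / 2) ?_
    have hev : ∀ᶠ k in atTop, sk k ≤ s + 1 :=
      hsum.eventually_le_const (lt_add_one s)
    filter_upwards [hev] with k hk
    rw [hkey k]
    have := hsk_nn k
    have := hT_nn k
    nlinarith
  -- per-N liminf lower bound
  have hln : ∀ N, (s^2 - (∑ i ∈ Finset.range N, (ρl i)^2) - ρl N * s)/2 ≤ liminf u atTop := by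
    intro N
    set v : ℕ → ℝ :=
      fun k => ((sk k)^2 - (∑ i ∈ Finset.range N, (ρ k i)^2) - ρ k N * sk k)/2 with hv
    have hvu : ∀ k, v k ≤ u k := by
      intro k
      rw [hkey k, hv]
      have := hTbound N k
      simp only
      linarith
    have hvt : Tendsto v atTop
        (nhds ((s^2 - (∑ i ∈ Finset.range N, (ρl i)^2) - ρl N * s)/2)) := by
      apply Tendsto.div_const
      exact ((hsum.pow 2).sub
        (tendsto_finset_sum _ fun i _ => (hlim i).pow 2)).sub ((hlim N).mul hsum)
    calc (s^2 - (∑ i ∈ Finset.range N, (ρl i)^2) - ρl N * s)/2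
        = liminf v atTop := (hvt.liminf_eq).symm
      _ ≤ liminf u atTop :=
          liminf_le_liminf (Eventually.of_forall hvu) hvt.isBoundedUnder_ge hub
  -- pass N → ∞
  have hLlim : Tendsto (fun N => (s^2 - (∑ i ∈ Finset.range N, (ρl i)^2) - ρl N * s)/2)
      atTop (nhds ((s^2 - Q - 0 * s)/2)) := by
    apply Tendsto.div_const
    exact ((tendsto_const_nhds).sub hρl2_sum.hasSum.tendsto_sum_nat).sub
      (hρl_to0.mul tendsto_const_nhds)
  have hfinal : (s^2 - Q)/2 ≤ liminf u atTop := by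
    have := le_of_tendsto hLlim (Eventually.of_forall hln)
    simpa using this
  have hQ_le : (((∑' i : ℕ, ρl i))^2 - Q + (s - ∑' i : ℕ, ρl i)^2)/2 ≤ (s^2 - Q)/2 := by
    nlinarith [hsI_nn, hsI_le]
  calc ((∑' i : ℕ, ρl i) ^ 2 - (∑' i : ℕ, (ρl i) ^ 2) + (s - ∑' i : ℕ, ρl i) ^ 2) / 2
      ≤ (s^2 - Q)/2 := hQ_le
    _ ≤ liminf u atTop := hfinal
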